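/- Let ψ ∈ ℂ^m⊗ℂ^n and φ ∈ ℂ^u⊗ℂ^v be unit vectors with Schmidt decompositions ψ = Σ_i λ_i (a_i ⊗ b_i) and φ = Σ_j μ_j (c_j ⊗ d_j), where (a_i), (b_i), (c_j), (d_j) are orthonormal families and λ_i, μ_j ≥ 0 with Σ_i λ_i² = Σ_j μ_j² = 1. Set ρ_AB = ψψ† and ρ_CD = φφ†. Then N_H^b(ρ_AB⊗ρ_CD) = 1 − Σ_{i,j} λ_i⁴ μ_j⁴. -/

import Mathlib

open scoped Matrix Kronecker BigOperators ComplexOrder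
open Matrix

/-- The positive-semidefinite square root of a PSD matrix (0 if not PSD). -/
noncomputable def psdSqrt {N : Type*} [Fintype N] [DecidableEq N] (A : Matrix N N ℂ) :
    Matrix N N ℂ :=
  open scoped Classical in
  if h : A.PosSemidef then
    (h.1.eigenvectorUnitary : Matrix N N ℂ) *
      diagonal (((↑) : ℝ → ℂ) ∘ Real.sqrt ∘ h.1.eigenvalues) *
      (star h.1.eigenvectorUnitary : Matrix N N ℂ) else 0

/-- Squared Frobenius (Hilbert–Schmidt) norm: `‖X‖² = tr (Xᴴ X)`. -/
noncomputable def hsNormSq {N : Type*} [Fintype N] (X : Matrix N N ℂ) : ℝ :=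
  (Matrix.trace (Xᴴ * X)).re

/-- A density matrix: positive semidefinite with unit trace. -/
def IsDensity {N : Type*} [Fintype N] [DecidableEq N] (ρ : Matrix N N ℂ) : Prop :=
  ρ.PosSemidef ∧ ρ.trace = 1

/-- Standard inner product on `ℂ^N`. -/
noncomputable def cInner {N : Type*} [Fintype N] (x y : N → ℂ) : ℂ :=
  ∑ i, star (x i) * y i

/-- Outer product `ψ ψ†`. -/
noncomputable def outer {N : Type*} (ψ : N → ℂ) : Matrix N N ℂ :=
  Matrix.vecMulVec ψ (star ψ)

/-- The family of unit vectors of a rank-one von Neumann measurement: an orthonormal basis,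
indexed by the dimension. -/
def IsVNM {N : Type*} [Fintype N] [DecidableEq N] (u : N → N → ℂ) : Prop :=
  ∀ a b, cInner (u a) (u b) = if a = b then (1 : ℂ) else 0

/-- The rank-one projection `Π_h = u_h u_h†` of a measurement. -/
noncomputable def projOf {N : Type*} (u : N → N → ℂ) (h : N) : Matrix N N ℂ :=
  outer (u h)

/-- The measurement `{u_h u_h†}` fixes `σ`: `Σ_h Π_h σ Π_h = σ`. -/
def FixesVNM {N : Type*} [Fintype N] (u : N → N → ℂ) (σ : Matrix N N ℂ) : Prop :=
  ∑ h, projOf u h * σ * projOf u h = σ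

/-- Reduced state of the second factor: `(ρ_B)_{j j'} = Σ_i ρ_{(i,j),(i,j')}`. -/
noncomputable def redB {m n : ℕ} (ρ : Matrix (Fin m × Fin n) (Fin m × Fin n) ℂ) :
    Matrix (Fin n) (Fin n) ℂ :=
  Matrix.of fun j j' => ∑ i, ρ (i, j) (i, j')

/-- Reduced state of the first factor: `(ρ_C)_{k k'} = Σ_l ρ_{(k,l),(k',l)}`. -/
noncomputable def redC {u v : ℕ} (ρ : Matrix (Fin u × Fin v) (Fin u × Fin v) ℂ) :
    Matrix (Fin u) (Fin u) ℂ :=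
  Matrix.of fun k k' => ∑ l, ρ (k, l) (k', l)

/-- `I_m ⊗ P ⊗ I_v` acting on the middle two factors. -/
noncomputable def ampMid (m v : ℕ) {n u : ℕ} (P : Matrix (Fin n × Fin u) (Fin n × Fin u) ℂ) :
    Matrix ((Fin m × Fin n) × Fin u × Fin v) ((Fin m × Fin n) × Fin u × Fin v) ℂ :=
  Matrix.of fun p q =>
    (if p.1.1 = q.1.1 then (1 : ℂ) else 0) * P (p.1.2, p.2.1) (q.1.2, q.2.1) *
      (if p.2.2 = q.2.2 then (1 : ℂ) else 0)

/-- The map `Π^{BC}(X) = Σ_h (I_m ⊗ Π_h ⊗ I_v) X (I_m ⊗ Π_h ⊗ I_v)`. -/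
noncomputable def pinchBC {m n u v : ℕ} (w : (Fin n × Fin u) → (Fin n × Fin u) → ℂ)
    (X : Matrix ((Fin m × Fin n) × Fin u × Fin v) ((Fin m × Fin n) × Fin u × Fin v) ℂ) :
    Matrix ((Fin m × Fin n) × Fin u × Fin v) ((Fin m × Fin n) × Fin u × Fin v) ℂ :=
  ∑ h, ampMid m v (projOf w h) * X * ampMid m v (projOf w h)

/-- The measurement-induced nonbilocality `N_H^b(ρ_AB ⊗ ρ_CD)`. -/
noncomputable def NHb {m n u v : ℕ}
    (ρAB : Matrix (Fin m × Fin n) (Fin m × Fin n) ℂ)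
    (ρCD : Matrix (Fin u × Fin v) (Fin u × Fin v) ℂ) : ℝ :=
  sSup { r : ℝ | ∃ w : (Fin n × Fin u) → (Fin n × Fin u) → ℂ,
    IsVNM w ∧ FixesVNM w (redB ρAB ⊗ₖ redC ρCD) ∧
    r = hsNormSq (psdSqrt (ρAB ⊗ₖ ρCD) - pinchBC w (psdSqrt (ρAB ⊗ₖ ρCD))) }

set_option linter.unusedSectionVars false
namespace NHbAux
variable {N : Type*} [Fintype N] [DecidableEq N]

lemma outer_apply (x : N → ℂ) (i j : N) : outer x i j = x i * star (x j) := rfl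

lemma outer_conjTranspose (x : N → ℂ) : (outer x)ᴴ = outer x := by
  ext i j
  simp [outer_apply, conjTranspose_apply, mul_comm]

lemma cInner_conj (x y : N → ℂ) : star (cInner x y) = cInner y x := by
  simp [cInner, star_sum, mul_comm]

lemma outer_mulVec (x y : N → ℂ) : outer x *ᵥ y = cInner x y • x := by
  funext i
  simp only [mulVec, dotProduct, outer_apply, cInner, Pi.smul_apply, smul_eq_mul,
    Finset.sum_mul]
  exact Finset.sum_congr rfl fun j _ => by ring

lemma sum_proj {w : N → N → ℂ} (hw : IsVNM w) : ∑ h, projOf w h = 1 := by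
  classical
  set V : Matrix N N ℂ := Matrix.of (fun a i => star (w a i)) with hV
  have key : V * Vᴴ = 1 := by
    ext a b
    have := hw a b
    simpa [hV, Matrix.mul_apply, cInner, Matrix.one_apply] using this
  have key2 : Vᴴ * V = 1 := mul_eq_one_comm.mp key
  ext i j
  have h2 := congrFun (congrFun key2 i) j
  simp only [hV, Matrix.mul_apply, conjTranspose_apply, Matrix.of_apply, star_star] at h2
  simpa [Matrix.sum_apply, projOf, outer_apply] using h2

lemma sum_proj_apply {w : N → N → ℂ} (hw : IsVNM w) (i j : N) :
    ∑ h, w h i * star (w h j) = if i = j then (1:ℂ) else 0 := by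
  have := congrFun (congrFun (sum_proj hw) i) j
  simpa [Matrix.sum_apply, projOf, outer_apply, Matrix.one_apply] using this

lemma sum_inner_mul {w : N → N → ℂ} (hw : IsVNM w) (x y : N → ℂ) :
    ∑ h, cInner x (w h) * cInner (w h) y = cInner x y := by
  classical
  have step : ∀ h, cInner x (w h) * cInner (w h) y
      = ∑ i, ∑ j, star (x i) * y j * (w h i * star (w h j)) := by
    intro h
    simp only [cInner, Finset.sum_mul_sum]
    exact Finset.sum_congr rfl fun i _ => Finset.sum_congr rfl fun j _ => by ring
  rw [Finset.sum_congr rfl fun h _ => step h]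
  rw [Finset.sum_comm]
  have : ∀ i, ∑ h, ∑ j, star (x i) * y j * (w h i * star (w h j))
      = star (x i) * y i := by
    intro i
    rw [Finset.sum_comm]
    have : ∀ j, ∑ h, star (x i) * y j * (w h i * star (w h j))
        = star (x i) * y j * (if i = j then (1:ℂ) else 0) := by
      intro j
      rw [← Finset.mul_sum, sum_proj_apply hw]
    rw [Finset.sum_congr rfl fun j _ => this j]
    simp
  rw [Finset.sum_congr rfl fun i _ => this i]
  rfl


lemma cInner_smul_right (c : ℂ) (x y : N → ℂ) : cInner x (c • y) = c * cInner x y := by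
  simp [cInner, Finset.mul_sum]
  exact Finset.sum_congr rfl fun i _ => by ring

lemma cInner_sum_right {γ : Type*} (s : Finset γ) (x : N → ℂ) (f : γ → N → ℂ) :
    cInner x (∑ g ∈ s, f g) = ∑ g ∈ s, cInner x (f g) := by
  simp only [cInner, Finset.sum_apply, Finset.mul_sum]
  exact Finset.sum_comm

lemma cInner_mulVec (M : Matrix N N ℂ) (u v : N → ℂ) :
    cInner (M *ᵥ u) v = cInner u (Mᴴ *ᵥ v) := by
  simp only [cInner, mulVec, dotProduct, conjTranspose_apply, star_sum, star_mul',
    Finset.sum_mul, Finset.mul_sum]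
  rw [Finset.sum_comm]
  exact Finset.sum_congr rfl fun i _ => Finset.sum_congr rfl fun j _ => by ring

lemma sandwich (w0 : N → ℂ) (σ : Matrix N N ℂ) :
    outer w0 * σ * outer w0 = cInner w0 (σ *ᵥ w0) • outer w0 := by
  ext i j
  simp only [Matrix.mul_apply, outer_apply, cInner, mulVec, dotProduct,
    Matrix.smul_apply, smul_eq_mul, Finset.mul_sum, Finset.sum_mul]
  rw [Finset.sum_comm]
  exact Finset.sum_congr rfl fun p _ => Finset.sum_congr rfl fun q _ => by ring

lemma eigen_of_fixes {w : N → N → ℂ} (hw : IsVNM w) {σ : Matrix N N ℂ}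
    (hfix : FixesVNM w σ) (g : N) :
    σ *ᵥ w g = cInner (w g) (σ *ᵥ w g) • w g := by
  classical
  have hσ : σ = ∑ h, cInner (w h) (σ *ᵥ w h) • projOf w h := by
    conv_lhs => rw [← hfix]
    exact Finset.sum_congr rfl fun h _ => sandwich (w h) σ
  conv_lhs => rw [hσ]
  funext i
  simp only [mulVec, dotProduct, Matrix.sum_apply, Matrix.smul_apply, projOf, outer_apply,
    smul_eq_mul, Finset.sum_mul]
  rw [Finset.sum_comm]
  have : ∀ h, ∑ j, cInner (w h) (σ *ᵥ w h) * (w h i * star (w h j)) * w g j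
      = cInner (w h) (σ *ᵥ w h) * w h i * (if h = g then (1:ℂ) else 0) := by
    intro h
    rw [← hw h g]
    simp only [cInner, Finset.mul_sum]
    exact Finset.sum_congr rfl fun j _ => by ring
  rw [Finset.sum_congr rfl fun h _ => this h]
  simp

lemma fixes_of_eigen {w : N → N → ℂ} (hw : IsVNM w) {σ : Matrix N N ℂ}
    (heig : ∀ h, ∃ γ : ℂ, σ *ᵥ w h = γ • w h) : FixesVNM w σ := by
  classical
  unfold FixesVNM
  have step : ∀ h, projOf w h * σ * projOf w h
      = cInner (w h) (σ *ᵥ w h) • projOf w h := fun h => sandwich (w h) σ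
  have hsum : (∑ h, projOf w h * σ * projOf w h) = ∑ h, cInner (w h) (σ *ᵥ w h) • projOf w h :=
    Finset.sum_congr rfl fun h _ => step h
  rw [hsum]
  ext i j
  simp only [Matrix.sum_apply, Matrix.smul_apply, projOf, outer_apply, smul_eq_mul]
  have key : ∀ h, cInner (w h) (σ *ᵥ w h) * (w h i * star (w h j))
      = (σ *ᵥ w h) i * star (w h j) := by
    intro h
    obtain ⟨γ, hγ⟩ := heig h
    rw [hγ, cInner_smul_right]
    have h1 := hw h h
    simp only [if_pos rfl] at h1
    rw [h1]
    simp [Pi.smul_apply, smul_eq_mul]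
    ring
  rw [Finset.sum_congr rfl fun h _ => key h]
  simp only [mulVec, dotProduct, Finset.sum_mul]
  rw [Finset.sum_comm]
  have : ∀ q, ∑ h, σ i q * w h q * star (w h j) = σ i q * (if q = j then (1:ℂ) else 0) := by
    intro q
    rw [← sum_proj_apply hw q j, Finset.mul_sum]
    exact Finset.sum_congr rfl fun h _ => by ring
  rw [Finset.sum_congr rfl fun q _ => this q]
  simp


lemma trace_outer_mul_outer (x y : N → ℂ) :
    Matrix.trace (outer x * outer y) = cInner x y * cInner y x := by
  simp only [Matrix.trace, Matrix.diag, Matrix.mul_apply, outer_apply, cInner]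
  rw [Finset.sum_mul_sum]
  rw [Finset.sum_comm]
  exact Finset.sum_congr rfl fun p _ => Finset.sum_congr rfl fun q _ => by ring

lemma hsNormSq_sub (A B : Matrix N N ℂ) :
    hsNormSq (A - B) = hsNormSq A - 2 * (Matrix.trace (Aᴴ * B)).re + hsNormSq B := by
  have expand : (A - B)ᴴ * (A - B) = Aᴴ*A - Aᴴ*B - (Bᴴ*A - Bᴴ*B) := by
    rw [conjTranspose_sub, sub_mul, mul_sub, mul_sub]
  have hBA : Matrix.trace (Bᴴ * A) = star (Matrix.trace (Aᴴ * B)) := by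
    rw [← Matrix.trace_conjTranspose, conjTranspose_mul, conjTranspose_conjTranspose]
  unfold hsNormSq
  rw [expand, Matrix.trace_sub, Matrix.trace_sub, Matrix.trace_sub, hBA]
  simp only [Complex.sub_re, Complex.add_re]
  have : (star (Matrix.trace (Aᴴ * B))).re = (Matrix.trace (Aᴴ * B)).re := by
    simp [Complex.star_def]
  rw [this]; ring

lemma outer_posSemidef (x : N → ℂ) : (outer x).PosSemidef := by
  exact Matrix.posSemidef_vecMulVec_self_star x

lemma outer_mul_outer_self (x : N → ℂ) (hx : cInner x x = 1) : outer x * outer x = outer x := by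
  ext i j
  simp only [Matrix.mul_apply, outer_apply]
  have : ∀ q, x i * star (x q) * (x q * star (x j)) = (star (x q) * x q) * (x i * star (x j)) :=
    fun q => by ring
  rw [Finset.sum_congr rfl fun q _ => this q, ← Finset.sum_mul]
  rw [show (∑ q, star (x q) * x q) = cInner x x from rfl, hx, one_mul]

lemma psdSqrt_outer (x : N → ℂ) (hx : cInner x x = 1) : psdSqrt (outer x) = outer x := by
  classical
  have hp := outer_posSemidef x
  have hsq : (outer x) ^ 2 = outer x := by rw [pow_two]; exact outer_mul_outer_self x hx
  rw [psdSqrt, dif_pos hp]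
  have key : ∀ i, Real.sqrt (hp.1.eigenvalues i) = hp.1.eigenvalues i := by
    intro i
    have h1 := hp.1.mulVec_eigenvectorBasis i
    have h2 := congrArg (fun y => outer x *ᵥ y) h1
    simp only at h2
    rw [mulVec_mulVec, outer_mul_outer_self x hx, h1, Matrix.mulVec_smul, h1, smul_smul] at h2
    have h3 : (hp.1.eigenvalues i * hp.1.eigenvalues i - hp.1.eigenvalues i) •
        (⇑(hp.1.eigenvectorBasis i) : N → ℂ) = 0 := by rw [sub_smul, ← h2, sub_self]
    have he := hp.eigenvalues_nonneg i
    rcases smul_eq_zero.mp h3 with h | h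
    · have : hp.1.eigenvalues i = 0 ∨ hp.1.eigenvalues i = 1 := by
        have : hp.1.eigenvalues i * (hp.1.eigenvalues i - 1) = 0 := by linarith
        rcases mul_eq_zero.mp this with h' | h'
        · exact Or.inl h'
        · exact Or.inr (by linarith)
      rcases this with h' | h' <;> rw [h'] <;> simp
    · exfalso
      apply hp.1.eigenvectorBasis.orthonormal.ne_zero i
      exact WithLp.ofLp_injective 2 h
  have hd : (((↑) : ℝ → ℂ) ∘ Real.sqrt ∘ hp.1.eigenvalues) = RCLike.ofReal ∘ hp.1.eigenvalues := by
    funext i; simp [key i]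
  rw [hd]
  conv_rhs => rw [hp.1.spectral_theorem]
  rw [Unitary.conjStarAlgAut_apply]


lemma cInner_smul_left (c : ℂ) (x y : N → ℂ) : cInner (c • x) y = star c * cInner x y := by
  simp only [cInner, Pi.smul_apply, smul_eq_mul, star_mul', Finset.mul_sum]
  exact Finset.sum_congr rfl fun i _ => by ring

lemma cInner_mul_left_right (c c' : ℂ) (f g : N → ℂ) :
    cInner (fun i => c * f i) (fun i => c' * g i) = star c * c' * cInner f g := by
  simp only [cInner, star_mul', Finset.mul_sum]
  exact Finset.sum_congr rfl fun i _ => by ring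

lemma cInner_sum_sum {S S' : Type*} [Fintype S] [Fintype S'] (F : S → N → ℂ) (G : S' → N → ℂ) :
    cInner (fun r => ∑ s, F s r) (fun r => ∑ s', G s' r) = ∑ s, ∑ s', cInner (F s) (G s') := by
  simp only [cInner, star_sum, Finset.sum_mul_sum]
  rw [Finset.sum_comm]
  exact Finset.sum_congr rfl fun s _ => Finset.sum_comm

lemma sum_mul_sum_comm {I S S' : Type*} [Fintype I] [Fintype S] [Fintype S']
    (f : S → I → ℂ) (g : S' → I → ℂ) :
    ∑ i, (∑ s, f s i) * (∑ s', g s' i) = ∑ s, ∑ s', ∑ i, f s i * g s' i := by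
  simp only [Finset.sum_mul_sum]
  rw [Finset.sum_comm]
  exact Finset.sum_congr rfl fun s _ => Finset.sum_comm

lemma cInner_prod {P Q : Type*} [Fintype P] [Fintype Q] (f f' : P → ℂ) (g g' : Q → ℂ) :
    cInner (fun r : P × Q => f r.1 * g r.2) (fun r => f' r.1 * g' r.2)
      = cInner f f' * cInner g g' := by
  simp only [cInner, Finset.sum_mul_sum, Fintype.sum_prod_type, star_mul']
  exact Finset.sum_congr rfl fun p _ => Finset.sum_congr rfl fun q _ => by ring

/-- The reindexing equivalence between the big index and (middle, outer). -/
def midEquiv (m n u v : ℕ) :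
    ((Fin m × Fin n) × Fin u × Fin v) ≃ (Fin n × Fin u) × (Fin m × Fin v) where
  toFun r := ((r.1.2, r.2.1), (r.1.1, r.2.2))
  invFun z := ((z.2.1, z.1.1), (z.1.2, z.2.2))
  left_inv := by rintro ⟨⟨i, j⟩, k, l⟩; rfl
  right_inv := by rintro ⟨⟨j, k⟩, i, l⟩; rfl

lemma cInner_midsep {m n u v : ℕ} (f f' : Fin n × Fin u → ℂ) (g g' : Fin m × Fin v → ℂ) :
    cInner (fun r : (Fin m × Fin n) × Fin u × Fin v => f (r.1.2, r.2.1) * g (r.1.1, r.2.2))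
      (fun r => f' (r.1.2, r.2.1) * g' (r.1.1, r.2.2)) = cInner f f' * cInner g g' := by
  rw [← cInner_prod f f' g g']
  unfold cInner
  exact Fintype.sum_equiv (midEquiv m n u v) _ _ (fun r => rfl)

lemma cInner_left_mid {m n u v : ℕ} (X : ((Fin m × Fin n) × Fin u × Fin v) → ℂ)
    (f : Fin n × Fin u → ℂ) (g : Fin m × Fin v → ℂ) :
    cInner X (fun r => f (r.1.2, r.2.1) * g (r.1.1, r.2.2))
      = ∑ z : Fin m × Fin v, (∑ p : Fin n × Fin u, star (X ((z.1, p.1), (p.2, z.2))) * f p) * g z := by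
  unfold cInner
  rw [Fintype.sum_equiv (midEquiv m n u v)
    (fun r => star (X r) * (f (r.1.2, r.2.1) * g (r.1.1, r.2.2)))
    (fun z => star (X ((z.2.1, z.1.1), (z.1.2, z.2.2))) * (f z.1 * g z.2)) (fun r => rfl)]
  rw [Fintype.sum_prod_type, Finset.sum_comm]
  refine Finset.sum_congr rfl fun z _ => ?_
  rw [Finset.sum_mul]
  exact Finset.sum_congr rfl fun p _ => by ring

lemma kron_outer {P Q : Type*} [Fintype P] [Fintype Q] (f : P → ℂ) (g : Q → ℂ) :
    outer f ⊗ₖ outer g = outer (fun r : P × Q => f r.1 * g r.2) := by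
  ext r q
  simp only [Matrix.kroneckerMap_apply, outer_apply, star_mul']
  ring


lemma ampMid_mul_apply {m n u v : ℕ} (W : Matrix (Fin n × Fin u) (Fin n × Fin u) ℂ)
    (X : Matrix ((Fin m × Fin n) × Fin u × Fin v) ((Fin m × Fin n) × Fin u × Fin v) ℂ)
    (r q : (Fin m × Fin n) × Fin u × Fin v) :
    (ampMid m v W * X) r q
      = ∑ p : Fin n × Fin u, W (r.1.2, r.2.1) p * X ((r.1.1, p.1), (p.2, r.2.2)) q := by
  obtain ⟨⟨i, j⟩, k, l⟩ := r
  rw [Matrix.mul_apply]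
  rw [Fintype.sum_equiv (midEquiv m n u v)
      (fun r₂ => ampMid m v W ((i,j),(k,l)) r₂ * X r₂ q)
      (fun z : (Fin n × Fin u) × (Fin m × Fin v) =>
        ampMid m v W ((i,j),(k,l)) ((z.2.1, z.1.1), (z.1.2, z.2.2))
          * X ((z.2.1, z.1.1), (z.1.2, z.2.2)) q)
      (fun r₂ => by rcases r₂ with ⟨⟨a, b⟩, c, e⟩; rfl)]
  rw [Fintype.sum_prod_type]
  refine Finset.sum_congr rfl fun p _ => ?_
  rw [Finset.sum_eq_single ((i, l) : Fin m × Fin v)]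
  · simp [ampMid]
  · rintro ⟨i₂, l₂⟩ _ hz
    have : i ≠ i₂ ∨ l ≠ l₂ := by
      by_contra hc
      push_neg at hc
      exact hz (by simp [hc.1.symm, hc.2.symm])
    rcases this with hne | hne <;> simp [ampMid, hne]
  · intro habs
    exact absurd (Finset.mem_univ _) habs

lemma mul_ampMid_apply {m n u v : ℕ} (W : Matrix (Fin n × Fin u) (Fin n × Fin u) ℂ)
    (X : Matrix ((Fin m × Fin n) × Fin u × Fin v) ((Fin m × Fin n) × Fin u × Fin v) ℂ)
    (r q : (Fin m × Fin n) × Fin u × Fin v) :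
    (X * ampMid m v W) r q
      = ∑ p : Fin n × Fin u, X r ((q.1.1, p.1), (p.2, q.2.2)) * W p (q.1.2, q.2.1) := by
  obtain ⟨⟨i, j⟩, k, l⟩ := q
  rw [Matrix.mul_apply]
  rw [Fintype.sum_equiv (midEquiv m n u v)
      (fun r₂ => X r r₂ * ampMid m v W r₂ ((i,j),(k,l)))
      (fun z : (Fin n × Fin u) × (Fin m × Fin v) =>
        X r ((z.2.1, z.1.1), (z.1.2, z.2.2))
          * ampMid m v W ((z.2.1, z.1.1), (z.1.2, z.2.2)) ((i,j),(k,l)))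
      (fun r₂ => by rcases r₂ with ⟨⟨a, b⟩, c, e⟩; rfl)]
  rw [Fintype.sum_prod_type]
  refine Finset.sum_congr rfl fun p _ => ?_
  rw [Finset.sum_eq_single ((i, l) : Fin m × Fin v)]
  · simp [ampMid]
  · rintro ⟨i₂, l₂⟩ _ hz
    have : i₂ ≠ i ∨ l₂ ≠ l := by
      by_contra hc
      push_neg at hc
      exact hz (by simp [hc.1, hc.2])
    rcases this with hne | hne <;> simp [ampMid, hne]
  · intro habs
    exact absurd (Finset.mem_univ _) habs

lemma pinch_outer_term {m n u v : ℕ} (w : (Fin n × Fin u) → (Fin n × Fin u) → ℂ)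
    (Ψ : ((Fin m × Fin n) × Fin u × Fin v) → ℂ) (h : Fin n × Fin u) :
    ampMid m v (projOf w h) * outer Ψ * ampMid m v (projOf w h)
      = outer (fun r => w h (r.1.2, r.2.1) *
          (∑ p : Fin n × Fin u, star (w h p) * Ψ ((r.1.1, p.1), (p.2, r.2.2)))) := by
  ext r q
  rw [mul_ampMid_apply, outer_apply]
  have hL : ∀ p : Fin n × Fin u,
      (ampMid m v (projOf w h) * outer Ψ) r ((q.1.1, p.1), (p.2, q.2.2))
          * projOf w h p (q.1.2, q.2.1)
        = ∑ p' : Fin n × Fin u,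
            w h (r.1.2, r.2.1) * star (w h p') * Ψ ((r.1.1, p'.1), (p'.2, r.2.2))
              * star (Ψ ((q.1.1, p.1), (p.2, q.2.2))) * (w h p * star (w h (q.1.2, q.2.1))) := by
    intro p
    rw [ampMid_mul_apply, Finset.sum_mul]
    refine Finset.sum_congr rfl fun p' _ => ?_
    simp only [projOf, outer_apply]
    ring
  rw [Finset.sum_congr rfl fun p _ => hL p]
  simp only [star_mul', star_sum, star_star, Finset.mul_sum, Finset.sum_mul]
  refine Finset.sum_congr rfl fun p _ => Finset.sum_congr rfl fun p' _ => by ring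


lemma cInner_expand {S S' : Type*} [Fintype S] [Fintype S'] (cf : S → ℂ) (cg : S' → ℂ)
    (F : S → N → ℂ) (G : S' → N → ℂ) :
    cInner (fun i => ∑ s, cf s * F s i) (fun i => ∑ s', cg s' * G s' i)
      = ∑ s, ∑ s', star (cf s) * cg s' * cInner (F s) (G s') := by
  rw [cInner_sum_sum (fun s i => cf s * F s i) (fun s' i => cg s' * G s' i)]
  exact Finset.sum_congr rfl fun s _ => Finset.sum_congr rfl fun s' _ =>
    cInner_mul_left_right _ _ _ _

lemma cInner_expand_right {S : Type*} [Fintype S] (y : N → ℂ) (cf : S → ℂ) (F : S → N → ℂ) :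
    cInner y (fun i => ∑ s, cf s * F s i) = ∑ s, cf s * cInner y (F s) := by
  simp only [cInner, Finset.mul_sum]
  rw [Finset.sum_comm]
  exact Finset.sum_congr rfl fun s _ => Finset.sum_congr rfl fun i _ => by ring

lemma star_real_coe (r : ℝ) : star ((r : ℝ) : ℂ) = ((r : ℝ) : ℂ) := by
  rw [Complex.star_def]; exact Complex.conj_ofReal r

lemma schmidt_cInner {P Q S : Type*} [Fintype P] [Fintype Q] [Fintype S] [DecidableEq S]
    (coef : S → ℝ) (A : S → P → ℂ) (B : S → Q → ℂ)
    (hA : ∀ s s', cInner (A s) (A s') = if s = s' then (1:ℂ) else 0)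
    (hB : ∀ s s', cInner (B s) (B s') = if s = s' then (1:ℂ) else 0) :
    cInner (fun p : P × Q => ∑ s, (coef s : ℂ) * A s p.1 * B s p.2)
      (fun p : P × Q => ∑ s, (coef s : ℂ) * A s p.1 * B s p.2)
      = ((∑ s, coef s ^ 2 : ℝ) : ℂ) := by
  classical
  have h1 : (fun p : P × Q => ∑ s, (coef s : ℂ) * A s p.1 * B s p.2)
      = fun p : P × Q => ∑ s, (coef s : ℂ) * ((fun r : P × Q => A s r.1 * B s r.2) p) := by
    funext p; exact Finset.sum_congr rfl fun s _ => by ring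
  rw [h1, cInner_expand]
  have h2 : ∀ s s' : S, star ((coef s : ℝ) : ℂ) * (coef s' : ℂ) *
      cInner (fun r : P × Q => A s r.1 * B s r.2) (fun r : P × Q => A s' r.1 * B s' r.2)
      = (if s = s' then ((coef s : ℂ) * (coef s')) else 0) := by
    intro s s'
    rw [cInner_prod, hA, hB, star_real_coe]
    by_cases hss : s = s' <;> simp [hss]
  rw [Finset.sum_congr rfl fun s _ => Finset.sum_congr rfl fun s' _ => h2 s s']
  simp only [Finset.sum_ite_eq, Finset.mem_univ, if_true]
  push_cast
  exact Finset.sum_congr rfl fun s _ => by ring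


lemma redB_outer {m n : ℕ} {ι : Type*} [Fintype ι] [DecidableEq ι]
    (ψ : Fin m × Fin n → ℂ) (lam : ι → ℝ) (a : ι → Fin m → ℂ) (b : ι → Fin n → ℂ)
    (ha : ∀ i i', cInner (a i) (a i') = if i = i' then (1 : ℂ) else 0)
    (hψ : ψ = fun p => ∑ i, (lam i : ℂ) * a i p.1 * b i p.2) :
    redB (outer ψ) = ∑ s, ((lam s : ℂ) ^ 2) • outer (b s) := by
  classical
  ext j j'
  have hcol : ∀ jj : Fin n, (fun i => ψ (i, jj)) = fun i => ∑ s, ((lam s : ℂ) * b s jj) * a s i := by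
    intro jj; funext i; rw [hψ]; exact Finset.sum_congr rfl fun s _ => by ring
  have hstar : redB (outer ψ) j j' = star (cInner (fun i => ψ (i, j)) (fun i => ψ (i, j'))) := by
    simp only [redB, Matrix.of_apply, outer_apply, cInner, star_sum, star_mul', star_star]
    try exact Finset.sum_congr rfl fun i _ => by ring
  have hinner : cInner (fun i => ψ (i, j)) (fun i => ψ (i, j'))
      = ∑ s, (lam s : ℂ)^2 * (star (b s j) * b s j') := by
    rw [hcol j, hcol j', cInner_expand]
    have h2 : ∀ s s', star ((lam s : ℂ) * b s j) * ((lam s' : ℂ) * b s' j') * cInner (a s) (a s')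
        = if s = s' then (lam s : ℂ)^2 * (star (b s j) * b s j') else 0 := by
      intro s s'
      rw [ha, star_mul', star_real_coe]
      by_cases hss : s = s'
      · subst hss; simp; try ring
      · simp [hss]
    rw [Finset.sum_congr rfl fun s _ => Finset.sum_congr rfl fun s' _ => h2 s s']
    simp [Finset.sum_ite_eq]
  rw [hstar, hinner]
  simp only [star_sum, star_mul', star_star, star_pow, star_real_coe, Matrix.sum_apply,
    Matrix.smul_apply, outer_apply, smul_eq_mul]
  try exact Finset.sum_congr rfl fun s _ => by ring

lemma redC_outer {u v : ℕ} {κ : Type*} [Fintype κ] [DecidableEq κ]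
    (φ : Fin u × Fin v → ℂ) (mu : κ → ℝ) (c : κ → Fin u → ℂ) (d : κ → Fin v → ℂ)
    (hd : ∀ j j', cInner (d j) (d j') = if j = j' then (1 : ℂ) else 0)
    (hφ : φ = fun p => ∑ j, (mu j : ℂ) * c j p.1 * d j p.2) :
    redC (outer φ) = ∑ t, ((mu t : ℂ) ^ 2) • outer (c t) := by
  classical
  ext k k'
  have hcol : ∀ kk : Fin u, (fun l => φ (kk, l)) = fun l => ∑ t, ((mu t : ℂ) * c t kk) * d t l := by
    intro kk; funext l; rw [hφ]
  have hstar : redC (outer φ) k k' = star (cInner (fun l => φ (k, l)) (fun l => φ (k', l))) := by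
    simp only [redC, Matrix.of_apply, outer_apply, cInner, star_sum, star_mul', star_star]
    try exact Finset.sum_congr rfl fun l _ => by ring
  have hinner : cInner (fun l => φ (k, l)) (fun l => φ (k', l))
      = ∑ t, (mu t : ℂ)^2 * (star (c t k) * c t k') := by
    rw [hcol k, hcol k', cInner_expand]
    have h2 : ∀ t t', star ((mu t : ℂ) * c t k) * ((mu t' : ℂ) * c t' k') * cInner (d t) (d t')
        = if t = t' then (mu t : ℂ)^2 * (star (c t k) * c t k') else 0 := by
      intro t t'
      rw [hd, star_mul', star_real_coe]
      by_cases htt : t = t'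
      · subst htt; simp; try ring
      · simp [htt]
    rw [Finset.sum_congr rfl fun t _ => Finset.sum_congr rfl fun t' _ => h2 t t']
    simp [Finset.sum_ite_eq]
  rw [hstar, hinner]
  simp only [star_sum, star_mul', star_star, star_pow, star_real_coe, Matrix.sum_apply,
    Matrix.smul_apply, outer_apply, smul_eq_mul]
  try exact Finset.sum_congr rfl fun t _ => by ring


lemma sum_mulVec {γ : Type*} [Fintype γ] (A : γ → Matrix N N ℂ) (x : N → ℂ) :
    (∑ g, A g) *ᵥ x = ∑ g, (A g *ᵥ x) := by
  funext i
  simp only [mulVec, dotProduct, Matrix.sum_apply, Finset.sum_apply, Finset.sum_mul]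
  exact Finset.sum_comm

lemma star_mul_self_eq_normSq (z : ℂ) : star z * z = (Complex.normSq z : ℂ) := by
  rw [Complex.star_def, ← Complex.normSq_eq_conj_mul_self]

lemma value_eq {m n u v : ℕ} {ι κ : Type*} [Fintype ι] [Fintype κ] [DecidableEq ι] [DecidableEq κ]
    (ψ : Fin m × Fin n → ℂ) (φ : Fin u × Fin v → ℂ)
    (lam : ι → ℝ) (mu : κ → ℝ)
    (a : ι → Fin m → ℂ) (b : ι → Fin n → ℂ)
    (c : κ → Fin u → ℂ) (d : κ → Fin v → ℂ)
    (ha : ∀ i i', cInner (a i) (a i') = if i = i' then (1 : ℂ) else 0)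
    (hb : ∀ i i', cInner (b i) (b i') = if i = i' then (1 : ℂ) else 0)
    (hc : ∀ j j', cInner (c j) (c j') = if j = j' then (1 : ℂ) else 0)
    (hd : ∀ j j', cInner (d j) (d j') = if j = j' then (1 : ℂ) else 0)
    (hlam1 : ∑ i, lam i ^ 2 = 1) (hmu1 : ∑ j, mu j ^ 2 = 1)
    (hψ : ψ = fun p => ∑ i, (lam i : ℂ) * a i p.1 * b i p.2)
    (hφ : φ = fun p => ∑ j, (mu j : ℂ) * c j p.1 * d j p.2)
    (w : (Fin n × Fin u) → (Fin n × Fin u) → ℂ) (hw : IsVNM w)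
    (hfix : FixesVNM w (redB (outer ψ) ⊗ₖ redC (outer φ))) :
    hsNormSq (outer ψ ⊗ₖ outer φ - pinchBC w (outer ψ ⊗ₖ outer φ))
      = 1 - ∑ i, ∑ j, lam i ^ 4 * mu j ^ 4 := by
  classical
  set Ψ : ((Fin m × Fin n) × Fin u × Fin v) → ℂ := fun r => ψ r.1 * φ r.2 with hΨdef
  set x : ι → κ → (Fin n × Fin u) → ℂ := fun s t p => b s p.1 * c t p.2 with hxdef
  set β : (Fin n × Fin u) → ι → κ → ℂ := fun h s t => cInner (w h) (x s t) with hβdef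
  set q : (Fin n × Fin u) → ℝ :=
    fun h => ∑ s, ∑ t, lam s ^ 2 * mu t ^ 2 * Complex.normSq (β h s t) with hqdef
  set α : (Fin n × Fin u) → (Fin m × Fin v) → ℂ :=
    fun h z => ∑ p : Fin n × Fin u, star (w h p) * Ψ ((z.1, p.1), (p.2, z.2)) with hαdef
  set vec : (Fin n × Fin u) → ((Fin m × Fin n) × Fin u × Fin v) → ℂ :=
    fun h r => w h (r.1.2, r.2.1) * α h (r.1.1, r.2.2) with hvecdef
  have hβap : ∀ h s t, cInner (w h) (x s t) = β h s t := fun h s t => rfl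
  have hqap : ∀ h, q h = ∑ s, ∑ t, lam s ^ 2 * mu t ^ 2 * Complex.normSq (β h s t) :=
    fun h => rfl
  -- norms
  have hψψ : cInner ψ ψ = 1 := by
    rw [hψ, schmidt_cInner lam a b ha hb, hlam1, Complex.ofReal_one]
  have hφφ : cInner φ φ = 1 := by
    rw [hφ, schmidt_cInner mu c d hc hd, hmu1, Complex.ofReal_one]
  have hΨΨ : cInner Ψ Ψ = 1 := by
    rw [hΨdef, cInner_prod ψ ψ φ φ, hψψ, hφφ, one_mul]
  -- x orthonormal
  have hxon : ∀ s t s' t', cInner (x s t) (x s' t')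
      = (if s = s' then (1:ℂ) else 0) * (if t = t' then (1:ℂ) else 0) := by
    intro s t s' t'
    simp only [hxdef]
    rw [cInner_prod (b s) (b s') (c t) (c t'), hb, hc]
  -- completeness of measurement against x
  have hβ1 : ∀ s t, ∑ h, Complex.normSq (β h s t) = 1 := by
    intro s t
    have h1 := sum_inner_mul hw (x s t) (x s t)
    rw [hxon s t s t] at h1
    norm_num at h1
    have h2 : ∀ h, cInner (x s t) (w h) * cInner (w h) (x s t)
        = (Complex.normSq (β h s t) : ℂ) := by
      intro h
      rw [← cInner_conj (w h) (x s t), hβap]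
      exact star_mul_self_eq_normSq _
    rw [Finset.sum_congr rfl fun h _ => h2 h] at h1
    exact_mod_cast h1
  -- structure of σ
  set σ : Matrix (Fin n × Fin u) (Fin n × Fin u) ℂ := redB (outer ψ) ⊗ₖ redC (outer φ) with hσdef
  have hσ : σ = ∑ s, ∑ t, (((lam s ^ 2 * mu t ^ 2 : ℝ)) : ℂ) • outer (x s t) := by
    rw [hσdef, redB_outer ψ lam a b ha hψ, redC_outer φ mu c d hd hφ]
    ext jk j'k'
    simp only [Matrix.kroneckerMap_apply, Matrix.sum_apply, Matrix.smul_apply, outer_apply,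
      smul_eq_mul, hxdef]
    rw [Finset.sum_mul_sum]
    refine Finset.sum_congr rfl fun s _ => Finset.sum_congr rfl fun t _ => ?_
    push_cast
    simp only [star_mul']
    ring
  have hherm : σᴴ = σ := by
    rw [hσ]
    simp only [Matrix.conjTranspose_sum, Matrix.conjTranspose_smul, outer_conjTranspose,
      star_real_coe]
  -- σ acts on x
  have hσx : ∀ s t, σ *ᵥ x s t = (((lam s ^ 2 * mu t ^ 2 : ℝ)) : ℂ) • x s t := by
    intro s t
    rw [hσ, sum_mulVec]
    have hin : ∀ s', (∑ t', (((lam s' ^ 2 * mu t' ^ 2 : ℝ)) : ℂ) • outer (x s' t')) *ᵥ x s t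
        = ∑ t', (((lam s' ^ 2 * mu t' ^ 2 : ℝ)) : ℂ) •
            (((if s' = s then (1:ℂ) else 0) * (if t' = t then (1:ℂ) else 0)) • x s' t') := by
      intro s'
      rw [sum_mulVec]
      refine Finset.sum_congr rfl fun t' _ => ?_
      rw [Matrix.smul_mulVec, outer_mulVec, hxon]
    rw [Finset.sum_congr rfl fun s' _ => hin s']
    rw [Finset.sum_eq_single s]
    · rw [Finset.sum_eq_single t]
      · simp
      · intro t' _ ht'; simp [ht']
      · intro hs; exact absurd (Finset.mem_univ _) hs
    · intro s' _ hs'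
      apply Finset.sum_eq_zero
      intro t' _
      simp [hs']
    · intro hs; exact absurd (Finset.mem_univ _) hs
  -- eigenvalue is q
  have heq : ∀ h, cInner (w h) (σ *ᵥ w h) = (q h : ℂ) := by
    intro h
    have hexp : σ *ᵥ w h
        = ∑ s, ∑ t, (((lam s ^ 2 * mu t ^ 2 : ℝ) : ℂ) * star (β h s t)) • x s t := by
      rw [hσ, sum_mulVec]
      refine Finset.sum_congr rfl fun s _ => ?_
      rw [sum_mulVec]
      refine Finset.sum_congr rfl fun t _ => ?_
      rw [Matrix.smul_mulVec, outer_mulVec, smul_smul]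
      congr 1
      rw [← cInner_conj (w h) (x s t), hβap]
    rw [hexp, cInner_sum_right]
    have hterm : ∀ s, cInner (w h) (∑ t, (((lam s ^ 2 * mu t ^ 2 : ℝ) : ℂ) * star (β h s t)) • x s t)
        = ∑ t, ((lam s ^ 2 * mu t ^ 2 : ℝ) : ℂ) * (Complex.normSq (β h s t) : ℂ) := by
      intro s
      rw [cInner_sum_right]
      refine Finset.sum_congr rfl fun t _ => ?_
      rw [cInner_smul_right, hβap]
      rw [mul_assoc]
      congr 1
      exact star_mul_self_eq_normSq _
    rw [Finset.sum_congr rfl fun s _ => hterm s, hqap]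
    push_cast
    rfl
  have heig : ∀ h, σ *ᵥ w h = (q h : ℂ) • w h := by
    intro h
    have := eigen_of_fixes hw hfix h
    rwa [heq h] at this
  -- the key pointwise identity
  have hK : ∀ h s t, lam s ^ 2 * mu t ^ 2 * Complex.normSq (β h s t)
      = q h * Complex.normSq (β h s t) := by
    intro h s t
    have h1 : cInner (σ *ᵥ w h) (x s t) = cInner (w h) (σ *ᵥ x s t) := by
      rw [cInner_mulVec, hherm]
    rw [heig h, hσx s t, cInner_smul_left, cInner_smul_right, star_real_coe, hβap] at h1
    have h2 := congrArg (fun z => z * star (β h s t)) h1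
    rw [mul_assoc, mul_assoc, mul_comm (β h s t) (star (β h s t)),
      star_mul_self_eq_normSq] at h2
    exact_mod_cast h2.symm
  -- sum of q² equals the target
  have hqq : ∑ h, q h ^ 2 = ∑ s, ∑ t, lam s ^ 4 * mu t ^ 4 := by
    have step1 : ∀ s t, lam s ^ 4 * mu t ^ 4
        = ∑ h, lam s ^ 2 * mu t ^ 2 * (lam s ^ 2 * mu t ^ 2 * Complex.normSq (β h s t)) := by
      intro s t
      have : lam s ^ 4 * mu t ^ 4
          = lam s ^ 2 * mu t ^ 2 * lam s ^ 2 * mu t ^ 2 * (∑ h, Complex.normSq (β h s t)) := by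
        rw [hβ1 s t]; ring
      rw [this, Finset.mul_sum]
      exact Finset.sum_congr rfl fun h _ => by ring
    rw [Finset.sum_congr rfl fun s (_ : s ∈ Finset.univ) =>
      Finset.sum_congr rfl fun t (_ : t ∈ Finset.univ) => step1 s t]
    -- now reorganize sums: Σ_s Σ_t Σ_h → Σ_h Σ_s Σ_t
    rw [Finset.sum_congr rfl fun s (_ : s ∈ Finset.univ) =>
      (Finset.sum_comm : (∑ t : κ, ∑ h : Fin n × Fin u,
        lam s ^ 2 * mu t ^ 2 * (lam s ^ 2 * mu t ^ 2 * Complex.normSq (β h s t)))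
        = ∑ h : Fin n × Fin u, ∑ t : κ, _)]
    rw [Finset.sum_comm]
    refine Finset.sum_congr rfl fun h _ => ?_
    -- Σ_s Σ_t coeff * (coeff * nsq) = q h ^ 2
    have : ∀ s t, lam s ^ 2 * mu t ^ 2 * (lam s ^ 2 * mu t ^ 2 * Complex.normSq (β h s t))
        = q h * (lam s ^ 2 * mu t ^ 2 * Complex.normSq (β h s t)) := by
      intro s t
      linear_combination (lam s ^ 2 * mu t ^ 2) * hK h s t
    rw [Finset.sum_congr rfl fun s (_ : s ∈ Finset.univ) =>
      Finset.sum_congr rfl fun t (_ : t ∈ Finset.univ) => this s t]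
    rw [Finset.sum_congr rfl fun s (_ : s ∈ Finset.univ) => (Finset.mul_sum _ _ _).symm]
    rw [← Finset.mul_sum, ← hqap h]
    ring
  -- the pinched matrix
  have hρ : outer ψ ⊗ₖ outer φ = outer Ψ := by rw [kron_outer, hΨdef]
  have hpinch : pinchBC w (outer Ψ) = ∑ h, outer (vec h) := by
    unfold pinchBC
    refine Finset.sum_congr rfl fun h _ => ?_
    rw [pinch_outer_term]
  have hvv : ∀ h h', cInner (vec h) (vec h')
      = (if h = h' then (1:ℂ) else 0) * cInner (α h) (α h') := by
    intro h h'
    simp only [hvecdef]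
    rw [cInner_midsep (w h) (w h') (α h) (α h'), hw]
  have hΨv : ∀ h, cInner Ψ (vec h) = cInner (α h) (α h) := by
    intro h
    simp only [hvecdef]
    rw [cInner_left_mid Ψ (w h) (α h)]
    have hstarα : ∀ z : Fin m × Fin v,
        star (α h z) = ∑ p : Fin n × Fin u, star (Ψ ((z.1, p.1), (p.2, z.2))) * w h p := by
      intro z
      simp only [hαdef, star_sum, star_mul', star_star]
      exact Finset.sum_congr rfl fun p _ => mul_comm _ _
    show _ = cInner (α h) (α h)
    simp only [cInner]
    exact Finset.sum_congr rfl fun z _ => by rw [← hstarα z]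
  -- α in terms of β
  have hαβ : ∀ h, α h = fun z : Fin m × Fin v => ∑ st : ι × κ,
      ((lam st.1 : ℂ) * (mu st.2 : ℂ) * β h st.1 st.2) * (a st.1 z.1 * d st.2 z.2) := by
    intro h
    funext z
    have hfun : (fun p : Fin n × Fin u => Ψ ((z.1, p.1), (p.2, z.2)))
        = fun p => ∑ st : ι × κ,
            ((lam st.1 : ℂ) * (mu st.2 : ℂ) * (a st.1 z.1 * d st.2 z.2)) * x st.1 st.2 p := by
      funext p
      simp only [hΨdef, hψ, hφ, hxdef]
      rw [Finset.sum_mul_sum]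
      rw [Fintype.sum_prod_type]
      exact Finset.sum_congr rfl fun s _ => Finset.sum_congr rfl fun t _ => by ring
    have : α h z = cInner (w h) (fun p : Fin n × Fin u => Ψ ((z.1, p.1), (p.2, z.2))) := by
      simp only [hαdef]; rfl
    rw [this, hfun, cInner_expand_right]
    refine Finset.sum_congr rfl fun st _ => ?_
    rw [hβap]
    ring
  have hαα : ∀ h, cInner (α h) (α h) = (q h : ℂ) := by
    intro h
    have hexp2 : cInner (α h) (α h) = ∑ st : ι × κ, ∑ st' : ι × κ,
        star ((lam st.1 : ℂ) * (mu st.2 : ℂ) * β h st.1 st.2)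
          * ((lam st'.1 : ℂ) * (mu st'.2 : ℂ) * β h st'.1 st'.2)
          * cInner (fun z : Fin m × Fin v => a st.1 z.1 * d st.2 z.2)
              (fun z => a st'.1 z.1 * d st'.2 z.2) := by
      rw [hαβ h]
      exact cInner_expand _ _ _ _
    rw [hexp2]
    have hterm : ∀ st st' : ι × κ,
        star ((lam st.1 : ℂ) * (mu st.2 : ℂ) * β h st.1 st.2)
          * ((lam st'.1 : ℂ) * (mu st'.2 : ℂ) * β h st'.1 st'.2)
          * cInner (fun z : Fin m × Fin v => a st.1 z.1 * d st.2 z.2)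
              (fun z => a st'.1 z.1 * d st'.2 z.2)
        = if st = st' then ((lam st.1 : ℂ)^2 * (mu st.2 : ℂ)^2
            * (Complex.normSq (β h st.1 st.2) : ℂ)) else 0 := by
      intro st st'
      rw [cInner_prod, ha, hd]
      by_cases hss : st = st'
      · subst hss
        simp only [if_pos rfl, mul_one]
        rw [show ((Complex.normSq (β h st.1 st.2) : ℝ) : ℂ)
            = star (β h st.1 st.2) * β h st.1 st.2 from (star_mul_self_eq_normSq _).symm]
        simp only [star_mul', star_real_coe, if_true, eq_self_iff_true, one_pow, mul_one]
        ring
      · have : st.1 ≠ st'.1 ∨ st.2 ≠ st'.2 := by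
          by_contra hcon
          push_neg at hcon
          exact hss (Prod.ext hcon.1 hcon.2)
        rcases this with hne | hne <;> simp [hne, hss]
    rw [Finset.sum_congr rfl fun st (_ : st ∈ Finset.univ) =>
      Finset.sum_congr rfl fun st' (_ : st' ∈ Finset.univ) => hterm st st']
    simp only [Finset.sum_ite_eq, Finset.mem_univ, if_true]
    rw [hqap]
    push_cast
    rw [Fintype.sum_prod_type]
    try rfl
    try exact Finset.sum_congr rfl fun st _ => Finset.sum_congr rfl fun st' _ => by ring
  -- the three trace pieces
  have hvΨ : ∀ h, cInner (vec h) Ψ = (q h : ℂ) := by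
    intro h
    rw [← cInner_conj Ψ (vec h), hΨv h, hαα h, star_real_coe]
  have hΨvq : ∀ h, cInner Ψ (vec h) = (q h : ℂ) := by
    intro h; rw [hΨv h, hαα h]
  -- assemble
  rw [hρ, hpinch, hsNormSq_sub]
  have piece1 : hsNormSq (outer Ψ) = 1 := by
    unfold hsNormSq
    rw [outer_conjTranspose, trace_outer_mul_outer, hΨΨ]
    simp
  have hsumq : (∑ h, ((q h : ℂ) * (q h : ℂ))) = ((∑ h, q h ^ 2 : ℝ) : ℂ) := by
    push_cast
    exact Finset.sum_congr rfl fun h _ => by ring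
  have piece2 : (Matrix.trace ((outer Ψ)ᴴ * ∑ h, outer (vec h))).re = ∑ h, q h ^ 2 := by
    rw [outer_conjTranspose, Matrix.mul_sum, Matrix.trace_sum]
    rw [Finset.sum_congr rfl fun h (_ : h ∈ Finset.univ) => trace_outer_mul_outer Ψ (vec h)]
    have hsum2 : (∑ h, cInner Ψ (vec h) * cInner (vec h) Ψ) = ∑ h, ((q h : ℂ) * (q h : ℂ)) :=
      Finset.sum_congr rfl fun h _ => by rw [hΨvq h, hvΨ h]
    rw [hsum2, hsumq, Complex.ofReal_re]
  have piece3 : hsNormSq (∑ h, outer (vec h)) = ∑ h, q h ^ 2 := by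
    have hBH : (∑ h, outer (vec h))ᴴ = ∑ h, outer (vec h) := by
      rw [Matrix.conjTranspose_sum]
      exact Finset.sum_congr rfl fun h _ => outer_conjTranspose _
    unfold hsNormSq
    rw [hBH, Matrix.sum_mul, Matrix.trace_sum]
    have inner3 : ∀ h, Matrix.trace (outer (vec h) * ∑ h', outer (vec h'))
        = (q h : ℂ) * (q h : ℂ) := by
      intro h
      rw [Matrix.mul_sum, Matrix.trace_sum]
      rw [Finset.sum_congr rfl fun h' (_ : h' ∈ Finset.univ) =>
        trace_outer_mul_outer (vec h) (vec h')]
      rw [Finset.sum_eq_single h]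
      · rw [hvv, hαα h]
        simp
      · intro h' _ hne
        rw [hvv, hvv]
        simp [hne, Ne.symm hne]
      · intro habs; exact absurd (Finset.mem_univ _) habs
    rw [Finset.sum_congr rfl fun h (_ : h ∈ Finset.univ) => inner3 h]
    rw [hsumq, Complex.ofReal_re]
  rw [piece1, piece2, piece3, ← hqq]
  ring


lemma kron_hermitian {P Q : Type*} [Fintype P] [Fintype Q]
    (A : Matrix P P ℂ) (B : Matrix Q Q ℂ) (hA : Aᴴ = A) (hB : Bᴴ = B) :
    (A ⊗ₖ B)ᴴ = A ⊗ₖ B := by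
  ext pq p'q'
  simp only [Matrix.conjTranspose_apply, Matrix.kroneckerMap_apply, star_mul']
  rw [← Matrix.conjTranspose_apply, ← Matrix.conjTranspose_apply, hA, hB]

lemma sum_smul_outer_herm {S : Type*} [Fintype S] (co : S → ℝ) (f : S → N → ℂ) :
    (∑ s, ((co s : ℂ) ^ 2) • outer (f s))ᴴ = ∑ s, ((co s : ℂ) ^ 2) • outer (f s) := by
  simp only [Matrix.conjTranspose_sum, Matrix.conjTranspose_smul, outer_conjTranspose,
    star_pow, star_real_coe]

lemma exists_vnm_fixes (σ : Matrix N N ℂ) (hσ : σ.IsHermitian) :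
    ∃ w : N → N → ℂ, IsVNM w ∧ FixesVNM w σ := by
  classical
  set w : N → N → ℂ := fun h => ⇑(hσ.eigenvectorBasis h) with hwdef
  have hw : IsVNM w := by
    intro g g'
    have h2 := orthonormal_iff_ite.mp hσ.eigenvectorBasis.orthonormal g g'
    simpa [cInner, PiLp.inner_apply, RCLike.inner_apply, hwdef, mul_comm] using h2
  refine ⟨w, hw, fixes_of_eigen hw ?_⟩
  intro h
  refine ⟨(hσ.eigenvalues h : ℂ), ?_⟩
  have h3 := hσ.mulVec_eigenvectorBasis h
  funext i
  have h4 := congrFun h3 i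
  simpa [hwdef, Complex.real_smul] using h4

end NHbAux

/-- For pure inputs with Schmidt coefficients λ_i and μ_j,
`N_H^b(ρ_AB ⊗ ρ_CD) = 1 − Σ_{i,j} λ_i⁴ μ_j⁴`. -/
theorem stmt0 {m n u v : ℕ} {ι κ : Type*} [Fintype ι] [Fintype κ] [DecidableEq ι] [DecidableEq κ]
    (ψ : Fin m × Fin n → ℂ) (φ : Fin u × Fin v → ℂ)
    (lam : ι → ℝ) (mu : κ → ℝ)
    (a : ι → Fin m → ℂ) (b : ι → Fin n → ℂ)
    (c : κ → Fin u → ℂ) (d : κ → Fin v → ℂ)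
    (ha : ∀ i i', cInner (a i) (a i') = if i = i' then (1 : ℂ) else 0)
    (hb : ∀ i i', cInner (b i) (b i') = if i = i' then (1 : ℂ) else 0)
    (hc : ∀ j j', cInner (c j) (c j') = if j = j' then (1 : ℂ) else 0)
    (hd : ∀ j j', cInner (d j) (d j') = if j = j' then (1 : ℂ) else 0)
    (hlam : ∀ i, 0 ≤ lam i) (hmu : ∀ j, 0 ≤ mu j)
    (hlam1 : ∑ i, lam i ^ 2 = 1) (hmu1 : ∑ j, mu j ^ 2 = 1)
    (hψ : ψ = fun p => ∑ i, (lam i : ℂ) * a i p.1 * b i p.2)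
    (hφ : φ = fun p => ∑ j, (mu j : ℂ) * c j p.1 * d j p.2) :
    NHb (outer ψ) (outer φ) = 1 - ∑ i, ∑ j, lam i ^ 4 * mu j ^ 4 := by
  classical
  have hψψ : cInner ψ ψ = 1 := by
    rw [hψ, NHbAux.schmidt_cInner lam a b ha hb, hlam1, Complex.ofReal_one]
  have hφφ : cInner φ φ = 1 := by
    rw [hφ, NHbAux.schmidt_cInner mu c d hc hd, hmu1, Complex.ofReal_one]
  have hΨΨ : cInner (fun r : (Fin m × Fin n) × Fin u × Fin v => ψ r.1 * φ r.2)
      (fun r : (Fin m × Fin n) × Fin u × Fin v => ψ r.1 * φ r.2) = 1 := by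
    rw [NHbAux.cInner_prod ψ ψ φ φ, hψψ, hφφ, one_mul]
  have hsqrt : psdSqrt (outer ψ ⊗ₖ outer φ) = outer ψ ⊗ₖ outer φ := by
    rw [NHbAux.kron_outer ψ φ]
    exact NHbAux.psdSqrt_outer _ hΨΨ
  have hherm : (redB (outer ψ) ⊗ₖ redC (outer φ)).IsHermitian := by
    show _ᴴ = _
    rw [NHbAux.redB_outer ψ lam a b ha hψ, NHbAux.redC_outer φ mu c d hd hφ]
    exact NHbAux.kron_hermitian _ _ (NHbAux.sum_smul_outer_herm lam b)
      (NHbAux.sum_smul_outer_herm mu c)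
  obtain ⟨w₀, hw₀, hfix₀⟩ := NHbAux.exists_vnm_fixes _ hherm
  have hval : ∀ w' : (Fin n × Fin u) → (Fin n × Fin u) → ℂ,
      IsVNM w' → FixesVNM w' (redB (outer ψ) ⊗ₖ redC (outer φ)) →
      hsNormSq (psdSqrt (outer ψ ⊗ₖ outer φ) - pinchBC w' (psdSqrt (outer ψ ⊗ₖ outer φ)))
        = 1 - ∑ i, ∑ j, lam i ^ 4 * mu j ^ 4 := by
    intro w' hw' hfix'
    rw [hsqrt]
    exact NHbAux.value_eq ψ φ lam mu a b c d ha hb hc hd hlam1 hmu1 hψ hφ w' hw' hfix'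
  have hset : {r : ℝ | ∃ w : (Fin n × Fin u) → (Fin n × Fin u) → ℂ,
      IsVNM w ∧ FixesVNM w (redB (outer ψ) ⊗ₖ redC (outer φ)) ∧
      r = hsNormSq (psdSqrt (outer ψ ⊗ₖ outer φ) - pinchBC w (psdSqrt (outer ψ ⊗ₖ outer φ)))}
      = {1 - ∑ i, ∑ j, lam i ^ 4 * mu j ^ 4} := by
    ext r
    simp only [Set.mem_setOf_eq, Set.mem_singleton_iff]
    constructor
    · rintro ⟨w', hw', hfix', rfl⟩
      exact hval w' hw' hfix'
    · rintro rfl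
      exact ⟨w₀, hw₀, hfix₀, (hval w₀ hw₀ hfix₀).symm⟩
  unfold NHb
  rw [hset, csSup_singleton]
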